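/- arXiv:2308.13898 — 7 statements merged into one kernel-verified Lean document; each statement's English description precedes it below -/
import Mathlib

section
/- For any node v of a finite DAG G and any topological schedule σ, and for any integer j with |anc(v)| < j ≤ |V| − |des(v)|, there exists a topological schedule σ' with σ'(v) = j. In other words, the bounds |anc(v)| < σ(v) ≤ |V| − |des(v)| on the scheduling position of v are tight. -/
open Finset

/-- Rank equiv for a strict total order on a fintype. -/
private lemma aux_rank {α : Type*} [Fintype α] (R : α → α → Prop) [IsStrictTotalOrder α R] :
    ∃ e : α ≃ Fin (Fintype.card α), (∀ a b : α, R a b → (e a : ℕ) < (e b : ℕ)) ∧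
      ∀ a : α, (e a : ℕ) = {b : α | R b a}.ncard := by
  classical
  letI L : LinearOrder α := linearOrderOfSTO R
  let m := monoEquivOfFin α rfl
  refine ⟨m.symm.toEquiv, fun a b h => ?_, fun a => ?_⟩
  · exact (OrderIso.lt_iff_lt m.symm).2 (show a < b from h)
  · have hset : {b : α | R b a} = ↑(Finset.univ.filter fun b : α => b < a) := by
      ext x; simp only [Set.mem_setOf_eq, coe_filter, mem_univ, true_and]
      exact Iff.rfl
    rw [hset, Set.ncard_coe_finset]
    have h1 : (Finset.univ.filter fun b : α => b < a) =
        (Finset.univ.filter fun i : Fin (Fintype.card α) => i < m.symm a).image m := by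
      ext x
      simp only [mem_filter, mem_image, mem_univ, true_and]
      constructor
      · intro hx
        refine ⟨m.symm x, ?_, by simp⟩
        exact (OrderIso.lt_iff_lt m.symm).2 hx
      · rintro ⟨i, hi, rfl⟩
        have := (OrderIso.lt_iff_lt m).2 hi
        simpa using this
    rw [h1, Finset.card_image_of_injective _ m.injective]
    have h2 : (Finset.univ.filter fun i : Fin (Fintype.card α) => i < m.symm a)
        = Finset.Iio (m.symm a) := by ext i; simp
    rw [h2, Fin.card_Iio]
    rfl

/-- Initial segments of a finset of any size ≤ card exist. -/
private lemma aux_seg {α : Type*} [LinearOrder α] (I : Finset α) (k : ℕ) (hk : k ≤ I.card) :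
    ∃ S : Finset α, S ⊆ I ∧ S.card = k ∧ ∀ x ∈ S, ∀ y ∈ I, y < x → y ∈ S := by
  classical
  let f := I.orderIsoOfFin rfl
  have hinj : Function.Injective (fun i : Fin I.card => (f i : α)) :=
    fun i j h => f.injective (Subtype.coe_injective h)
  refine ⟨(Finset.univ.filter fun i : Fin I.card => (i : ℕ) < k).image
      (fun i => (f i : α)), ?_, ?_, ?_⟩
  · intro x hx
    simp only [mem_image] at hx
    obtain ⟨i, _, rfl⟩ := hx
    exact (f i).2
  · rw [Finset.card_image_of_injective _ hinj]
    have : (Finset.univ.filter fun i : Fin I.card => (i : ℕ) < k)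
        = Finset.univ.map (Fin.castLEEmb hk) := by
      ext i
      simp only [mem_filter, mem_univ, true_and, mem_map]
      constructor
      · intro h
        refine ⟨⟨i, h⟩, ?_⟩
        ext; simp
      · rintro ⟨j, -, rfl⟩; simpa using j.isLt
    rw [this, Finset.card_map, Finset.card_univ, Fintype.card_fin]
  · intro x hx y hy hyx
    simp only [mem_image, mem_filter, mem_univ, true_and] at hx ⊢
    obtain ⟨i, hi, rfl⟩ := hx
    refine ⟨f.symm ⟨y, hy⟩, ?_, by simp⟩
    have : f.symm ⟨y, hy⟩ < f.symm (f i) := by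
      apply f.symm.lt_iff_lt.2
      exact Subtype.mk_lt_mk.2 hyx
    simp only [OrderIso.symm_apply_apply] at this
    have h2 : ((f.symm ⟨y, hy⟩ : Fin I.card) : ℕ) < (i : ℕ) := this
    omega


/-- Tightness of the position bounds. For any node `v` of a finite
DAG and any `j` with `|anc(v)| < j ≤ |V| − |des(v)|`, there is a topological
schedule `σ'` placing `v` at position `j` (positions in `{1,...,|V|}`,
represented via `Fin` with position `(σ' v) + 1`). -/
theorem stmt_2 {V : Type*} [Fintype V] (E : V → V → Prop)
    (hacyc : ∀ v : V, ¬ Relation.TransGen E v v) (v : V) (j : ℕ)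
    (hj1 : {u : V | Relation.TransGen E u v}.ncard < j)
    (hj2 : j ≤ Fintype.card V - {u : V | Relation.TransGen E v u}.ncard) :
    ∃ σ' : V ≃ Fin (Fintype.card V),
      (∀ u w : V, E u w → (σ' u : ℕ) < (σ' w : ℕ)) ∧ (σ' v : ℕ) + 1 = j := by
  classical
  set A : Finset V := Finset.univ.filter (fun u => Relation.TransGen E u v) with hA
  set D : Finset V := Finset.univ.filter (fun u => Relation.TransGen E v u) with hD
  set I : Finset V := Finset.univ.filter
    (fun u => ¬ Relation.TransGen E u v ∧ ¬ Relation.TransGen E v u ∧ u ≠ v) with hI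
  have hAcard : {u : V | Relation.TransGen E u v}.ncard = A.card := by
    rw [hA, Set.ncard_eq_toFinset_card']; congr 1; ext x; simp
  have hDcard : {u : V | Relation.TransGen E v u}.ncard = D.card := by
    rw [hD, Set.ncard_eq_toFinset_card']; congr 1; ext x; simp
  rw [hAcard] at hj1
  rw [hDcard] at hj2
  -- partition of the vertex set
  have hvA : v ∉ A := by simp [hA]; exact hacyc v
  have hvD : v ∉ D := by simp [hD]; exact hacyc v
  have hvI : v ∉ I := by simp [hI]
  have dAD : Disjoint A D := by
    rw [Finset.disjoint_left]
    intro x hx hx'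
    simp only [hA, hD, mem_filter, mem_univ, true_and] at hx hx'
    exact hacyc x (hx.trans hx')
  have dADI : Disjoint (A ∪ D) I := by
    rw [Finset.disjoint_left]
    intro x hx hx'
    simp only [hA, hD, hI, mem_union, mem_filter, mem_univ, true_and] at hx hx'
    tauto
  have dADIv : Disjoint (A ∪ D ∪ I) {v} := by
    rw [Finset.disjoint_right]
    intro x hx
    simp only [mem_singleton] at hx
    subst hx
    simp only [mem_union]
    tauto
  have hpart : A.card + D.card + I.card + 1 = Fintype.card V := by
    have huniv : A ∪ D ∪ I ∪ {v} = Finset.univ := by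
      ext x
      simp only [hA, hD, hI, mem_union, mem_filter, mem_univ, true_and, mem_singleton]
      tauto
    have := congrArg Finset.card huniv
    rw [Finset.card_union_of_disjoint dADIv, Finset.card_union_of_disjoint dADI,
      Finset.card_union_of_disjoint dAD, Finset.card_univ, Finset.card_singleton] at this
    omega
  -- linear extension of the reachability partial order
  haveI hpo : IsPartialOrder V (fun a b => a = b ∨ Relation.TransGen E a b) :=
    { refl := fun a => Or.inl rfl
      trans := by
        rintro a b c (rfl | hab) (rfl | hbc)
        · exact Or.inl rfl
        · exact Or.inr hbc
        · exact Or.inr hab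
        · exact Or.inr (hab.trans hbc)
      antisymm := by
        intro a b h1 h2
        rcases h1 with h1 | h1
        · exact h1
        · rcases h2 with h2 | h2
          · exact h2.symm
          · exact absurd (h1.trans h2) (hacyc a) }
  obtain ⟨s, hs, hps⟩ := extend_partialOrder (fun a b => a = b ∨ Relation.TransGen E a b)
  haveI := hs
  set s' : V → V → Prop := fun a b => s a b ∧ a ≠ b with hs'
  haveI hsto : IsStrictTotalOrder V s' :=
    { trichotomous := by
        intro a b
        by_cases hab : a = b
        · exact fun _ _ => hab
        · rcases total_of s a b with h | h
          · exact fun h1 _ => (h1 ⟨h, hab⟩).elim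
          · exact fun _ h2 => (h2 ⟨h, Ne.symm hab⟩).elim
      irrefl := fun a h => h.2 rfl
      trans := by
        rintro a b c ⟨hab, ne1⟩ ⟨hbc, ne2⟩
        refine ⟨trans_of s hab hbc, ?_⟩
        rintro rfl
        exact ne1 (antisymm_of s hab hbc) }
  letI LV : LinearOrder V := linearOrderOfSTO s'
  -- the initial segment S of incomparable vertices
  have hAj : A.card < j := hj1
  set k : ℕ := j - 1 - A.card with hk
  have hkI : k ≤ I.card := by omega
  obtain ⟨S, hSI, hScard, hSdc⟩ := aux_seg I k hkI
  -- the class function and final order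
  set cls : V → ℕ := fun x => if x ∈ A ∪ S then 0 else if x = v then 1 else 2 with hcls
  set R : V → V → Prop := fun a b => cls a < cls b ∨ (cls a = cls b ∧ s' a b) with hR
  have hvAS : v ∉ A ∪ S := by
    rw [Finset.mem_union]
    rintro (h | h)
    · exact hvA h
    · exact hvI (hSI h)
  have c0 : ∀ x, x ∈ A ∪ S → cls x = 0 := by
    intro x hx
    simp only [hcls]
    rw [if_pos hx]
  have c2 : ∀ x, x ∉ A ∪ S → x ≠ v → cls x = 2 := by
    intro x hx hxv
    simp only [hcls]
    rw [if_neg hx, if_neg hxv]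
  have cle2 : ∀ x, cls x ≤ 2 := by
    intro x
    simp only [hcls]
    split
    · omega
    · split <;> omega
  have hclsv : cls v = 1 := by
    simp only [hcls]
    rw [if_neg hvAS]
    simp
  haveI hRsto : IsStrictTotalOrder V R :=
    { trichotomous := by
        intro a b
        rcases lt_trichotomy (cls a) (cls b) with h | h | h
        · exact fun h1 _ => (h1 (Or.inl h)).elim
        · rcases trichotomous_of s' a b with h' | h' | h'
          · exact fun h1 _ => (h1 (Or.inr ⟨h, h'⟩)).elim
          · exact fun _ _ => h'
          · exact fun _ h2 => (h2 (Or.inr ⟨h.symm, h'⟩)).elim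
        · exact fun _ h2 => (h2 (Or.inl h)).elim
      irrefl := by
        rintro a (h | ⟨-, h⟩)
        · exact lt_irrefl _ h
        · exact h.2 rfl
      trans := by
        rintro a b c (h1 | ⟨e1, h1⟩) (h2 | ⟨e2, h2⟩)
        · exact Or.inl (lt_trans h1 h2)
        · exact Or.inl (e2 ▸ h1)
        · exact Or.inl (e1 ▸ h2)
        · exact Or.inr ⟨e1.trans e2, trans_of s' h1 h2⟩ }
  -- edges respect R
  have hE : ∀ u w : V, E u w → R u w := by
    intro u w huw
    have hne : u ≠ w := by
      rintro rfl
      exact hacyc u (Relation.TransGen.single huw)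
    have hs'uw : s' u w := ⟨hps u w (Or.inr (Relation.TransGen.single huw)), hne⟩
    have hle : cls u ≤ cls w := by
      by_cases hwAS : w ∈ A ∪ S
      · -- show u ∈ A ∪ S
        have huAS : u ∈ A ∪ S := by
          rcases Finset.mem_union.1 hwAS with hw | hw
          · simp only [hA, mem_filter, mem_univ, true_and] at hw
            exact Finset.mem_union_left _ (by
              simp only [hA, mem_filter, mem_univ, true_and]
              exact Relation.TransGen.head huw hw)
          · have hwI := hSI hw
            simp only [hI, mem_filter, mem_univ, true_and] at hwI
            by_cases huA : Relation.TransGen E u v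
            · exact Finset.mem_union_left _ (by
                simp only [hA, mem_filter, mem_univ, true_and]; exact huA)
            · have huD : ¬ Relation.TransGen E v u := by
                intro h
                exact hwI.2.1 (h.tail huw)
              have hunv : u ≠ v := by
                rintro rfl
                exact hwI.2.1 (Relation.TransGen.single huw)
              have huI : u ∈ I := by
                simp only [hI, mem_filter, mem_univ, true_and]
                exact ⟨huA, huD, hunv⟩
              exact Finset.mem_union_right _ (hSdc w hw u huI hs'uw)
        rw [c0 u huAS, c0 w hwAS]
      · by_cases hwv : w = v
        · subst hwv
          have huA : u ∈ A ∪ S := Finset.mem_union_left _ (by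
            simp only [hA, mem_filter, mem_univ, true_and]
            exact Relation.TransGen.single huw)
          rw [c0 u huA, hclsv]
          omega
        · rw [c2 w hwAS hwv]
          exact cle2 u
    rcases lt_or_eq_of_le hle with h | h
    · exact Or.inl h
    · exact Or.inr ⟨h, hs'uw⟩
  obtain ⟨e, he1, he2⟩ := aux_rank R
  refine ⟨e, fun u w huw => he1 u w (hE u w huw), ?_⟩
  have hsetv : {b : V | R b v} = ↑(A ∪ S) := by
    ext b
    simp only [Set.mem_setOf_eq, Finset.mem_coe, hR]
    constructor
    · rintro (h | ⟨heq, hs'bv⟩)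
      · rw [hclsv] at h
        by_contra hb
        rcases eq_or_ne b v with rfl | hbv
        · rw [hclsv] at h; omega
        · rw [c2 b hb hbv] at h; omega
      · rw [hclsv] at heq
        exfalso
        rcases eq_or_ne b v with rfl | hbv
        · exact hs'bv.2 rfl
        · by_cases hbAS : b ∈ A ∪ S
          · rw [c0 b hbAS] at heq; omega
          · rw [c2 b hbAS hbv] at heq; omega
    · intro hb
      left
      rw [hclsv, c0 b hb]
      omega
  have hdisj : Disjoint A S := by
    rw [Finset.disjoint_left]
    intro x hx hx'
    have := hSI hx'
    simp only [hA, mem_filter, mem_univ, true_and] at hx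
    simp only [hI, mem_filter, mem_univ, true_and] at this
    exact this.1 hx
  have hcount : (e v : ℕ) = j - 1 := by
    rw [he2 v, hsetv, Set.ncard_coe_finset, Finset.card_union_of_disjoint hdisj,
      hScard]
    omega
  omega
end

section
/- Let g be a subgraph scheduled as a contiguous block with transient footprints t⁰, t¹, ..., tⁿ satisfying tⁱ ≥ t⁰ and tⁱ ≥ tⁿ for all 1 ≤ i < n (intermediate transient footprint never dips below input or output transient footprint). Let Y be a set of parallel operators with stable footprints s_y. Then for any interleaving of the operators of g with the operators of Y, the peak memory (max over all steps of stable footprint of the executing operator plus the transient footprint of the other side) is at least the peak memory of the schedule that executes all of g contiguously, either entirely before or entirely after each y ∈ Y. Hence fusing g into a single hypernode preserves the optimal peak memory. -/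
/-- Number of `g`-steps (true) among positions `≤ t` (inclusive). -/
def countG {N : ℕ} (b : Fin N → Bool) (t : Fin N) : ℕ :=
  (Finset.univ.filter (fun t' : Fin N => t' ≤ t ∧ b t' = true)).card

/-- Number of `Y`-steps (false) among positions `≤ t` (inclusive). -/
def countY {N : ℕ} (b : Fin N → Bool) (t : Fin N) : ℕ :=
  (Finset.univ.filter (fun t' : Fin N => t' ≤ t ∧ b t' = false)).card

/-- Number of `g`-steps strictly before position `t`. -/
def countGBefore {N : ℕ} (b : Fin N → Bool) (t : Fin N) : ℕ :=
  (Finset.univ.filter (fun t' : Fin N => t' < t ∧ b t' = true)).card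

/-- Number of `Y`-steps strictly before position `t`. -/
def countYBefore {N : ℕ} (b : Fin N → Bool) (t : Fin N) : ℕ :=
  (Finset.univ.filter (fun t' : Fin N => t' < t ∧ b t' = false)).card

/-- Global stable footprint at position `t` of an interleaving `b` of the
sequence `g` (stable footprints `sg`, transient `tg`) with the parallel
operators `Y` (stable footprints `sy`, transient `ty`): when `g` executes, it is
`s_g^i + t_y^k`; when `y` executes, it is `s_y^k + t_g^i`. -/
def stableAt {N : ℕ} (sg tg sy ty : ℕ → ℝ) (b : Fin N → Bool) (t : Fin N) : ℝ :=
  if b t then sg (countG b t) + ty (countYBefore b t)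
  else sy (countY b t) + tg (countGBefore b t)

/-- Peak memory of an interleaving: max over all steps of the stable footprint. -/
noncomputable def peakMem {N : ℕ} (sg tg sy ty : ℕ → ℝ) (b : Fin N → Bool) : ℝ :=
  ⨆ t : Fin N, stableAt sg tg sy ty b t

/-- The `g`-steps form a contiguous block. -/
def contiguous {N : ℕ} (b : Fin N → Bool) : Prop :=
  ∀ t1 t2 t3 : Fin N, t1 ≤ t2 → t2 ≤ t3 → b t1 = true → b t3 = true → b t2 = true

private lemma card_filter_eq {N : ℕ} (p : Fin N → Prop) [DecidablePred p]
    (s : Finset ℕ) (hs : ∀ v ∈ s, v < N) (h : ∀ t : Fin N, p t ↔ t.val ∈ s) :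
    (Finset.univ.filter p).card = s.card := by
  rw [← Finset.card_attachFin s hs]
  congr 1
  ext t
  simp [Finset.mem_attachFin, h]

private lemma countY_le_countYBefore {N} (b : Fin N → Bool) {u v : Fin N} (h : u < v) :
    countY b u ≤ countYBefore b v := by
  apply Finset.card_le_card
  intro x hx
  simp only [Finset.mem_filter, Finset.mem_univ, true_and] at *
  exact ⟨hx.1.trans_lt h, hx.2⟩

private lemma countG_le_countGBefore {N} (b : Fin N → Bool) {u v : Fin N} (h : u < v) :
    countG b u ≤ countGBefore b v := by
  apply Finset.card_le_card
  intro x hx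
  simp only [Finset.mem_filter, Finset.mem_univ, true_and] at *
  exact ⟨hx.1.trans_lt h, hx.2⟩

private lemma countYBefore_mono {N} (b : Fin N → Bool) {u v : Fin N} (h : u ≤ v) :
    countYBefore b u ≤ countYBefore b v := by
  apply Finset.card_le_card
  intro x hx
  simp only [Finset.mem_filter, Finset.mem_univ, true_and] at *
  exact ⟨hx.1.trans_le h, hx.2⟩

private lemma countGBefore_mono {N} (b : Fin N → Bool) {u v : Fin N} (h : u ≤ v) :
    countGBefore b u ≤ countGBefore b v := by
  apply Finset.card_le_card
  intro x hx
  simp only [Finset.mem_filter, Finset.mem_univ, true_and] at *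
  exact ⟨hx.1.trans_le h, hx.2⟩

private lemma countG_eq_succ {N} (b : Fin N → Bool) {t : Fin N} (h : b t = true) :
    countG b t = countGBefore b t + 1 := by
  unfold countG countGBefore
  have hins : (Finset.univ.filter (fun t' : Fin N => t' ≤ t ∧ b t' = true))
      = insert t (Finset.univ.filter (fun t' : Fin N => t' < t ∧ b t' = true)) := by
    ext x
    simp only [Finset.mem_insert, Finset.mem_filter, Finset.mem_univ, true_and]
    constructor
    · rintro ⟨hle, hbx⟩
      rcases eq_or_lt_of_le hle with h1 | h1
      · left; exact Fin.eq_of_val_eq (congrArg Fin.val h1)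
      · right; exact ⟨h1, hbx⟩
    · rintro (rfl | ⟨hlt, hbx⟩)
      · exact ⟨le_refl _, h⟩
      · exact ⟨le_of_lt hlt, hbx⟩
  rw [hins, Finset.card_insert_of_notMem (by simp)]

private lemma countY_eq_succ {N} (b : Fin N → Bool) {t : Fin N} (h : b t = false) :
    countY b t = countYBefore b t + 1 := by
  unfold countY countYBefore
  have hins : (Finset.univ.filter (fun t' : Fin N => t' ≤ t ∧ b t' = false))
      = insert t (Finset.univ.filter (fun t' : Fin N => t' < t ∧ b t' = false)) := by
    ext x
    simp only [Finset.mem_insert, Finset.mem_filter, Finset.mem_univ, true_and]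
    constructor
    · rintro ⟨hle, hbx⟩
      rcases eq_or_lt_of_le hle with h1 | h1
      · left; exact Fin.eq_of_val_eq (congrArg Fin.val h1)
      · right; exact ⟨h1, hbx⟩
    · rintro (rfl | ⟨hlt, hbx⟩)
      · exact ⟨le_refl _, h⟩
      · exact ⟨le_of_lt hlt, hbx⟩
  rw [hins, Finset.card_insert_of_notMem (by simp)]

private lemma countYBefore_le_card {N} (b : Fin N → Bool) (t : Fin N) :
    countYBefore b t ≤ (Finset.univ.filter (fun x : Fin N => b x = false)).card := by
  apply Finset.card_le_card
  intro x hx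
  simp only [Finset.mem_filter, Finset.mem_univ, true_and] at *
  exact hx.2

private lemma countGBefore_le_card {N} (b : Fin N → Bool) (t : Fin N) :
    countGBefore b t ≤ (Finset.univ.filter (fun x : Fin N => b x = true)).card := by
  apply Finset.card_le_card
  intro x hx
  simp only [Finset.mem_filter, Finset.mem_univ, true_and] at *
  exact hx.2

private lemma card_le_fin {k : ℕ} (i : Fin k) :
    (Finset.univ.filter (fun j : Fin k => j ≤ i)).card = i.val + 1 := by
  have h := card_filter_eq (fun j : Fin k => j ≤ i) (Finset.range (i.val + 1))
    (by intro v hv; simp only [Finset.mem_range] at hv; omega)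
    (by intro t; show t ≤ i ↔ _; rw [Fin.le_def, Finset.mem_range]; omega)
  rw [Finset.card_range] at h
  exact h

private lemma rank_lemma {N k : ℕ} (s : Finset (Fin N)) (hs : s.card = k)
    (p : Fin N → Prop) [DecidablePred p] (hps : ∀ t, p t ↔ t ∈ s) (i : Fin k) :
    (Finset.univ.filter (fun t' => t' ≤ (s.orderIsoOfFin hs i : Fin N) ∧ p t')).card
      = i.val + 1 := by
  classical
  set e := s.orderIsoOfFin hs with he
  have himg : Finset.univ.filter (fun t' : Fin N => t' ≤ (e i : Fin N) ∧ p t')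
      = (Finset.univ.filter (fun j : Fin k => j ≤ i)).image (fun j => (e j : Fin N)) := by
    ext x
    simp only [Finset.mem_filter, Finset.mem_image, Finset.mem_univ, true_and]
    constructor
    · rintro ⟨hle, hpx⟩
      refine ⟨e.symm ⟨x, (hps x).1 hpx⟩, ?_, by simp⟩
      rw [← e.le_iff_le]
      simpa using (Subtype.coe_le_coe.1 hle : (⟨x, (hps x).1 hpx⟩ : s) ≤ e i)
    · rintro ⟨j, hj, rfl⟩
      exact ⟨Subtype.coe_le_coe.2 (e.le_iff_le.2 hj), (hps _).2 (e j).2⟩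
  rw [himg, Finset.card_image_of_injective _
    (fun a b hab => e.injective (Subtype.ext hab)), card_le_fin]

/-- if the intermediate transient footprints of `g` never dip below
the input transient `tg 0` and the output transient `tg n`, then every
interleaving of `g` with the parallel operators `Y` has peak memory at least
that of some interleaving executing all of `g` contiguously; hence fusing `g`
preserves the optimal peak memory. -/
theorem stmt_5 (n m : ℕ) (hn : 0 < n) (sg tg sy ty : ℕ → ℝ)
    (ht : ∀ i, 1 ≤ i → i < n → tg 0 ≤ tg i ∧ tg n ≤ tg i)
    (b : Fin (n + m) → Bool)
    (hb : (Finset.univ.filter (fun t : Fin (n + m) => b t = true)).card = n) :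
    ∃ b' : Fin (n + m) → Bool,
      (Finset.univ.filter (fun t : Fin (n + m) => b' t = true)).card = n ∧
      contiguous b' ∧
      peakMem sg tg sy ty b' ≤ peakMem sg tg sy ty b := by
  classical
  have hYcard : (Finset.univ.filter (fun t : Fin (n + m) => b t = false)).card = m := by
    have h := Finset.card_filter_add_card_filter_not
      (s := (Finset.univ : Finset (Fin (n + m)))) (p := fun t => b t = true)
    simp only [Bool.not_eq_true, Finset.card_univ, Fintype.card_fin] at h
    omega
  set G := Finset.univ.filter (fun t : Fin (n + m) => b t = true) with hGdef
  set Y := Finset.univ.filter (fun t : Fin (n + m) => b t = false) with hYdef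
  set eG := G.orderIsoOfFin hb with heG
  set eY := Y.orderIsoOfFin hYcard with heY
  have hbG : ∀ i : Fin n, b (eG i) = true := by
    intro i
    have h := (eG i).2
    exact (Finset.mem_filter.mp h).2
  have hbY : ∀ j : Fin m, b (eY j) = false := by
    intro j
    have h := (eY j).2
    exact (Finset.mem_filter.mp h).2
  have hcG : ∀ i : Fin n, countG b (eG i) = i.val + 1 := by
    intro i
    exact rank_lemma G hb (fun t => b t = true) (by intro t; simp [hGdef]) i
  have hcY : ∀ j : Fin m, countY b (eY j) = j.val + 1 := by
    intro j
    exact rank_lemma Y hYcard (fun t => b t = false) (by intro t; simp [hYdef]) j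
  obtain ⟨i0, -, hi0⟩ := Finset.exists_min_image Finset.univ
    (fun i : Fin n => ty (countYBefore b (eG i))) ⟨⟨0, hn⟩, Finset.mem_univ _⟩
  set k := countYBefore b (eG i0) with hk
  have hkm : k ≤ m := by
    have h := countYBefore_le_card b (eG i0)
    rw [← hYdef, hYcard] at h
    exact h
  set b' : Fin (n + m) → Bool := fun t => decide (k ≤ t.val ∧ t.val < k + n) with hb'
  have hb'card : (Finset.univ.filter (fun t : Fin (n + m) => b' t = true)).card = n := by
    have h := card_filter_eq (fun t : Fin (n + m) => b' t = true) (Finset.Ico k (k + n))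
      (by intro v hv; rw [Finset.mem_Ico] at hv; omega)
      (by intro t; simp [hb', Finset.mem_Ico])
    rw [h, Nat.card_Ico]
    omega
  have hcont : contiguous b' := by
    intro t1 t2 t3 h12 h23 ht1 ht3
    simp only [hb', decide_eq_true_eq] at ht1 ht3 ⊢
    rw [Fin.le_def] at h12 h23
    omega
  refine ⟨b', hb'card, hcont, ?_⟩
  have key : ∀ t : Fin (n + m), ∃ t' : Fin (n + m),
      stableAt sg tg sy ty b' t ≤ stableAt sg tg sy ty b t' := by
    intro t
    by_cases h1 : t.val < k
    · -- before the block
      have hb't : b' t = false := by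
        simp only [hb', decide_eq_false_iff_not]
        omega
      have hcy : countY b' t = t.val + 1 := by
        have h := card_filter_eq (fun t' : Fin (n + m) => t' ≤ t ∧ b' t' = false)
          (Finset.range (t.val + 1))
          (by intro v hv; rw [Finset.mem_range] at hv; omega)
          (by intro t'
              simp only [Finset.mem_range, hb', decide_eq_false_iff_not, Fin.le_def]
              omega)
        rw [countY, h, Finset.card_range]
      have hcgb : countGBefore b' t = 0 := by
        rw [countGBefore, Finset.card_eq_zero, Finset.filter_eq_empty_iff]
        intro x _
        simp only [hb', decide_eq_true_eq, Fin.lt_def]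
        omega
      have hjm : t.val < m := lt_of_lt_of_le h1 hkm
      refine ⟨eY ⟨t.val, hjm⟩, ?_⟩
      set j : Fin m := ⟨t.val, hjm⟩ with hj
      have e1 : stableAt sg tg sy ty b' t = sy (t.val + 1) + tg 0 := by
        simp only [stableAt, hb't, hcy, hcgb]
        simp
      have e2 : stableAt sg tg sy ty b (eY j) =
          sy (t.val + 1) + tg (countGBefore b (eY j)) := by
        simp only [stableAt, hbY j, hcY j]
        simp [hj]
      rw [e1, e2]
      refine (add_le_add_iff_left _).2 ?_
      have hlt : (eY j : Fin (n + m)) < (eG i0 : Fin (n + m)) := by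
        by_contra hcon
        push_neg at hcon
        have hmon : countYBefore b (eG i0) ≤ countYBefore b (eY j) :=
          countYBefore_mono b hcon
        have hYe := countY_eq_succ b (hbY j)
        rw [hcY j] at hYe
        have hjv : j.val = t.val := rfl
        omega
      have hIlt : countGBefore b (eY j) < n := by
        have h3 : countGBefore b (eY j) ≤ countGBefore b (eG i0) :=
          countGBefore_mono b hlt.le
        have h4 := countG_eq_succ b (hbG i0)
        rw [hcG i0] at h4
        have := i0.isLt
        omega
      rcases Nat.eq_zero_or_pos (countGBefore b (eY j)) with h0 | h0
      · rw [h0]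
      · exact (ht _ h0 hIlt).1
    · by_cases h2 : t.val < k + n
      · -- inside the block
        have hb't : b' t = true := by
          simp only [hb', decide_eq_true_eq]
          omega
        have hcg : countG b' t = t.val + 1 - k := by
          have h := card_filter_eq (fun t' : Fin (n + m) => t' ≤ t ∧ b' t' = true)
            (Finset.Icc k t.val)
            (by intro v hv; rw [Finset.mem_Icc] at hv; omega)
            (by intro t'
                simp only [Finset.mem_Icc, hb', decide_eq_true_eq, Fin.le_def]
                omega)
          rw [countG, h, Nat.card_Icc]
        have hcyb : countYBefore b' t = k := by
          have h := card_filter_eq (fun t' : Fin (n + m) => t' < t ∧ b' t' = false)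
            (Finset.range k)
            (by intro v hv; rw [Finset.mem_range] at hv; omega)
            (by intro t'
                simp only [Finset.mem_range, hb', decide_eq_false_iff_not, Fin.lt_def]
                omega)
          rw [countYBefore, h, Finset.card_range]
        have hin : t.val - k < n := by omega
        refine ⟨eG ⟨t.val - k, hin⟩, ?_⟩
        set i : Fin n := ⟨t.val - k, hin⟩ with hi
        have e1 : stableAt sg tg sy ty b' t = sg (t.val + 1 - k) + ty k := by
          simp only [stableAt, hb't, hcg, hcyb]
          simp
        have e2 : stableAt sg tg sy ty b (eG i) =
            sg (t.val + 1 - k) + ty (countYBefore b (eG i)) := by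
          simp only [stableAt, hbG i, hcG i]
          have : i.val + 1 = t.val + 1 - k := by
            have : i.val = t.val - k := rfl
            omega
          rw [this]
          simp
        rw [e1, e2]
        exact (add_le_add_iff_left _).2 (hi0 i (Finset.mem_univ _))
      · -- after the block
        have h2' : k + n ≤ t.val := by omega
        have hb't : b' t = false := by
          simp only [hb', decide_eq_false_iff_not]
          omega
        have hcy : countY b' t = t.val + 1 - n := by
          have hdisj : Disjoint (Finset.range k) (Finset.Ico (k + n) (t.val + 1)) := by
            rw [Finset.disjoint_left]
            intro a ha hb2
            rw [Finset.mem_range] at ha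
            rw [Finset.mem_Ico] at hb2
            omega
          have h := card_filter_eq (fun t' : Fin (n + m) => t' ≤ t ∧ b' t' = false)
            (Finset.range k ∪ Finset.Ico (k + n) (t.val + 1))
            (by intro v hv
                simp only [Finset.mem_union, Finset.mem_range, Finset.mem_Ico] at hv
                omega)
            (by intro t'
                simp only [Finset.mem_union, Finset.mem_range, Finset.mem_Ico, hb',
                  decide_eq_false_iff_not, Fin.le_def]
                omega)
          rw [countY, h, Finset.card_union_of_disjoint hdisj, Finset.card_range,
            Nat.card_Ico]
          omega
        have hcgb : countGBefore b' t = n := by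
          have h := card_filter_eq (fun t' : Fin (n + m) => t' < t ∧ b' t' = true)
            (Finset.Ico k (k + n))
            (by intro v hv; rw [Finset.mem_Ico] at hv; omega)
            (by intro t'
                simp only [Finset.mem_Ico, hb', decide_eq_true_eq, Fin.lt_def]
                omega)
          rw [countGBefore, h, Nat.card_Ico]
          omega
        have hjm : t.val - n < m := by omega
        refine ⟨eY ⟨t.val - n, hjm⟩, ?_⟩
        set j : Fin m := ⟨t.val - n, hjm⟩ with hj
        have e1 : stableAt sg tg sy ty b' t = sy (t.val + 1 - n) + tg n := by
          simp only [stableAt, hb't, hcy, hcgb]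
          simp
        have e2 : stableAt sg tg sy ty b (eY j) =
            sy (t.val + 1 - n) + tg (countGBefore b (eY j)) := by
          simp only [stableAt, hbY j, hcY j]
          have : j.val + 1 = t.val + 1 - n := by
            have : j.val = t.val - n := rfl
            omega
          rw [this]
          simp
        rw [e1, e2]
        refine (add_le_add_iff_left _).2 ?_
        have hgt : (eG i0 : Fin (n + m)) < (eY j : Fin (n + m)) := by
          by_contra hcon
          push_neg at hcon
          have hne : (eY j : Fin (n + m)) ≠ (eG i0 : Fin (n + m)) := by
            intro he
            have hb1 := hbY j
            rw [he, hbG i0] at hb1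
            exact absurd hb1 (by simp)
          have hlt2 : (eY j : Fin (n + m)) < (eG i0 : Fin (n + m)) :=
            lt_of_le_of_ne hcon hne
          have hle2 := countY_le_countYBefore b hlt2
          rw [hcY j] at hle2
          have hjv : j.val = t.val - n := rfl
          omega
        have hge1 := countG_le_countGBefore b hgt
        rw [hcG i0] at hge1
        have hlen : countGBefore b (eY j) ≤ n := by
          have h := countGBefore_le_card b (eY j)
          rw [← hGdef, hb] at h
          exact h
        rcases eq_or_lt_of_le hlen with he | hlt3
        · rw [he]
        · exact (ht _ (by omega) hlt3).2
  have hne : Nonempty (Fin (n + m)) := ⟨⟨0, by omega⟩⟩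
  rw [peakMem, peakMem]
  apply ciSup_le
  intro t
  obtain ⟨t', ht'⟩ := key t
  exact ht'.trans (le_ciSup (Set.Finite.bddAbove (Set.finite_range _)) t')
end

section
/- In the ILP formulation, suppose binary variables O_{i,j} and T_{i,j} satisfy: (i) O is a permutation matrix; (ii) O_{i,j} ≤ T_{k,j} for every k ∈ IN(i) (inputs of i); (iii) T_{i,j} ≤ T_{i,j−1} + O_{i,j} for all i, j ≥ 1; (iv) T_{i,0} = 0 for every non-input tensor i. Then the schedule σ induced by O respects all precedence constraints: for every operator i and every producer k of an input tensor of i, σ(k) < σ(i). -/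
/-- ILP topological constraints imply precedence. If `O` is a 0-1
permutation matrix over steps `{1,...,|V|}`, `T` is 0-1, `O i j ≤ T k j` for
every input `k ∈ IN i`, `T i j ≤ T i (j-1) + O i j`, and `T i 0 = 0` for every
non-input tensor, then the induced schedule `σ` (where `O i (σ i) = 1`)
satisfies `σ k < σ i` for every operator `i` and every producer `k` of one of
its input tensors. -/
theorem stmt_9 {V : Type*} [Fintype V] (O T : V → ℕ → ℕ) (IN : V → Finset V)
    (INPUT : Set V)
    (hObin : ∀ (i : V) (j : ℕ), O i j = 0 ∨ O i j = 1)
    (hTbin : ∀ (i : V) (j : ℕ), T i j = 0 ∨ T i j = 1)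
    (hcol : ∀ j ∈ Finset.Icc 1 (Fintype.card V), ∑ i : V, O i j = 1)
    (hrow : ∀ i : V, ∑ j ∈ Finset.Icc 1 (Fintype.card V), O i j = 1)
    (hprec : ∀ (i : V) (j : ℕ), ∀ k ∈ IN i, O i j ≤ T k j)
    (hlive : ∀ (i : V) (j : ℕ), 1 ≤ j → T i j ≤ T i (j - 1) + O i j)
    (hnoself : ∀ i : V, i ∉ IN i)
    (hINnoninput : ∀ i : V, ∀ k ∈ IN i, k ∉ INPUT)
    (hinit : ∀ i : V, i ∉ INPUT → T i 0 = 0) :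
    ∀ σ : V → ℕ, (∀ i : V, σ i ∈ Finset.Icc 1 (Fintype.card V) ∧ O i (σ i) = 1) →
      ∀ i : V, ∀ k ∈ IN i, σ k < σ i := by
  classical
  intro σ hσ i k hk
  obtain ⟨hσi, hOi⟩ := hσ i
  obtain ⟨hσk, hOk⟩ := hσ k
  -- T k (σ i) = 1
  have hT1 : T k (σ i) = 1 := by
    have := hprec i (σ i) k hk
    rw [hOi] at this
    rcases hTbin k (σ i) with h | h
    · omega
    · exact h
  -- there exists j' ≤ σ i with 1 ≤ j' and O k j' = 1
  have key : ∀ j : ℕ, T k j = 1 → ∃ j', 1 ≤ j' ∧ j' ≤ j ∧ O k j' = 1 := by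
    intro j
    induction j with
    | zero =>
      intro h
      have := hinit k (hINnoninput i k hk)
      omega
    | succ n ih =>
      intro h
      rcases hObin k (n + 1) with hO | hO
      · have hle := hlive k (n + 1) (by omega)
        simp only [Nat.add_sub_cancel] at hle
        have hTn : T k n = 1 := by
          rcases hTbin k n with h' | h' <;> omega
        obtain ⟨j', h1, h2, h3⟩ := ih hTn
        exact ⟨j', h1, by omega, h3⟩
      · exact ⟨n + 1, by omega, le_rfl, hO⟩
  obtain ⟨j', hj1, hj2, hj3⟩ := key (σ i) hT1
  simp only [Finset.mem_Icc] at hσi hσk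
  -- j' ∈ Icc, so j' = σ k by row uniqueness
  have hj'mem : j' ∈ Finset.Icc 1 (Fintype.card V) := by
    simp only [Finset.mem_Icc]; omega
  have hjeq : j' = σ k := by
    by_contra hne
    have hsub : ({j', σ k} : Finset ℕ) ⊆ Finset.Icc 1 (Fintype.card V) := by
      intro x hx
      simp only [Finset.mem_insert, Finset.mem_singleton] at hx
      rcases hx with rfl | rfl
      · exact hj'mem
      · simp only [Finset.mem_Icc]; omega
    have h2 : ∑ x ∈ ({j', σ k} : Finset ℕ), O k x ≤
        ∑ x ∈ Finset.Icc 1 (Fintype.card V), O k x :=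
      Finset.sum_le_sum_of_subset hsub
    rw [Finset.sum_pair hne, hrow k, hj3, hOk] at h2
    omega
  -- σ k ≠ σ i by column uniqueness (i ≠ k)
  have hknei : k ≠ i := fun h => hnoself i (h ▸ hk)
  have hne2 : σ k ≠ σ i := by
    intro heq
    have h2 : ∑ x ∈ ({k, i} : Finset V), O x (σ i) ≤ ∑ x : V, O x (σ i) :=
      Finset.sum_le_sum_of_subset (Finset.subset_univ _)
    rw [Finset.sum_pair hknei, hOi] at h2
    rw [heq] at hOk
    rw [hOk, hcol (σ i) (by simp only [Finset.mem_Icc]; omega)] at h2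
    omega
  omega
end

section
/- Conversely, every topological schedule σ of the computation graph induces a feasible solution of the ILP: setting O_{i,j} = 1 iff σ(i) = j, and T_{i,j} = 1 iff σ(i) ≤ j ≤ max over consumers c of i of σ(c) (tensor live from production to last use), satisfies the constraints Σ_i O_{i,j} = 1, Σ_j O_{i,j} = 1, O_{i,j} ≤ T_{k,j} for k ∈ IN(i), T_{i,j} ≤ T_{i,j−1} + O_{i,j}, and T_{i,0} = 0 for non-input tensors. -/
/-- every topological schedule `σ` induces a feasible ILP
solution: `O i j = 1` iff `σ i = j`, and `T i j = 1` iff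
`σ i ≤ j ≤ max over consumers c of i of σ c` (tensor live from production to
last use); these satisfy all the topological ILP constraints. -/
theorem stmt_10 {V : Type*} [Fintype V] [DecidableEq V] (IN : V → Finset V)
    (INPUT : Set V) (σ : V → ℕ)
    (hbij : Set.BijOn σ Set.univ (Set.Icc 1 (Fintype.card V)))
    (htopo : ∀ i : V, ∀ k ∈ IN i, σ k < σ i) :
    let O : V → ℕ → ℕ := fun i j => if σ i = j then 1 else 0
    let last : V → ℕ := fun k =>
      max (σ k) ((Finset.univ.filter (fun i : V => k ∈ IN i)).sup σ)
    let T : V → ℕ → ℕ := fun k j => if σ k ≤ j ∧ j ≤ last k then 1 else 0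
    (∀ j ∈ Finset.Icc 1 (Fintype.card V), ∑ i : V, O i j = 1) ∧
    (∀ i : V, ∑ j ∈ Finset.Icc 1 (Fintype.card V), O i j = 1) ∧
    (∀ (i : V) (j : ℕ), ∀ k ∈ IN i, O i j ≤ T k j) ∧
    (∀ (i : V) (j : ℕ), 1 ≤ j → T i j ≤ T i (j - 1) + O i j) ∧
    (∀ i : V, i ∉ INPUT → T i 0 = 0) := by

  intro O last T
  have hmem : ∀ i : V, σ i ∈ Set.Icc 1 (Fintype.card V) := fun i =>
    hbij.mapsTo (Set.mem_univ i)
  refine ⟨?_, ?_, ?_, ?_, ?_⟩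
  · intro j hj
    obtain ⟨i, -, hi⟩ := hbij.surjOn (by simpa using hj)
    rw [Finset.sum_eq_single i]
    · simp [O, hi]
    · intro b _ hb
      simp only [O]
      rw [if_neg]
      intro h
      exact hb (hbij.injOn (Set.mem_univ b) (Set.mem_univ i) (h.trans hi.symm))
    · simp
  · intro i
    rw [Finset.sum_eq_single (σ i)]
    · simp [O]
    · intro b _ hb; simp [O, Ne.symm hb]
    · intro h
      exact absurd (by simpa using hmem i) (by simpa using h)
  · intro i j k hk
    simp only [O, T]
    split
    · next h =>
      rw [if_pos]
      constructor
      · exact h ▸ (htopo i k hk).le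
      · refine h ▸ le_trans ?_ (le_max_right _ _)
        exact Finset.le_sup (by simpa using hk)
    · exact Nat.zero_le _
  · intro i j hj
    simp only [T, O]
    split
    · next h =>
      by_cases hij : σ i = j
      · simp [hij]
      · rw [if_pos ⟨by omega, by omega⟩]
        omega
    · exact Nat.zero_le _
  · intro i _
    have := (hmem i).1
    simp only [T]
    rw [if_neg]
    omega
end

section
/- Variable pruning soundness: in any feasible solution of the ILP topological constraints, O_{i,j} = 0 for all j ≤ |anc(i)| and for all j > |V| − |des(i)|; moreover T_{i,j} = 0 for all j ≤ |anc(i)|. Hence adding these equalities as constraints does not change the set of feasible schedules or the optimal peak memory. -/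
/-- variable-pruning soundness. In any feasible solution of the
ILP topological constraints for a DAG `E` (inputs of operator `i` are its
direct predecessors), we have `O i j = 0` for all `j ≤ |anc(i)|` and for all
`j > |V| − |des(i)|`, and moreover `T i j = 0` for all `j ≤ |anc(i)|`; hence
adding these equalities as constraints does not change the feasible set. -/
theorem stmt_11 {V : Type*} [Fintype V] (E : V → V → Prop)
    (hacyc : ∀ v : V, ¬ Relation.TransGen E v v)
    (O T : V → ℕ → ℕ)
    (hObin : ∀ (i : V) (j : ℕ), O i j = 0 ∨ O i j = 1)
    (hTbin : ∀ (i : V) (j : ℕ), T i j = 0 ∨ T i j = 1)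
    (hcol : ∀ j ∈ Finset.Icc 1 (Fintype.card V), ∑ i : V, O i j = 1)
    (hrow : ∀ i : V, ∑ j ∈ Finset.Icc 1 (Fintype.card V), O i j = 1)
    (hOsupp : ∀ (i : V) (j : ℕ), O i j = 1 → j ∈ Finset.Icc 1 (Fintype.card V))
    (hprec : ∀ (i : V) (j : ℕ), ∀ k : V, E k i → O i j ≤ T k j)
    (hlive : ∀ (i : V) (j : ℕ), 1 ≤ j → T i j ≤ T i (j - 1) + O i j)
    (hliveprod : ∀ (i : V) (j : ℕ), T i j = 1 → ∃ j' ≤ j, O i j' = 1) :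
    ∀ (i : V) (j : ℕ),
      (j ≤ {u : V | Relation.TransGen E u i}.ncard → O i j = 0 ∧ T i j = 0) ∧
      (Fintype.card V - {u : V | Relation.TransGen E i u}.ncard < j → O i j = 0) := by
  classical
  set n := Fintype.card V with hn
  -- existence of a scheduled step for each operator
  have hex : ∀ i : V, ∃ j, O i j = 1 := by
    intro i
    by_contra h
    push_neg at h
    have hz : ∀ j ∈ Finset.Icc 1 n, O i j = 0 := fun j _ =>
      (hObin i j).resolve_right (h j)
    have := hrow i
    rw [Finset.sum_eq_zero hz] at this
    exact absurd this (by norm_num)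
  choose t ht using hex
  have htmem : ∀ i, t i ∈ Finset.Icc 1 n := fun i => hOsupp i (t i) (ht i)
  -- uniqueness: O i j = 0 away from t i
  have hzero : ∀ i j, j ≠ t i → O i j = 0 := by
    intro i j hj
    rcases hObin i j with h0 | h1
    · exact h0
    · exfalso
      have hjmem := hOsupp i j h1
      have hsum := hrow i
      rw [← Finset.add_sum_erase _ (O i) (htmem i), ht i] at hsum
      have hrest : ∑ j' ∈ (Finset.Icc 1 n).erase (t i), O i j' = 0 := by omega
      have := Finset.sum_eq_zero_iff.mp hrest j (Finset.mem_erase.mpr ⟨hj, hjmem⟩)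
      omega
  -- injectivity of t
  have hinj : Function.Injective t := by
    intro a b hab
    by_contra hne
    have hsum := hcol (t a) (htmem a)
    rw [← Finset.add_sum_erase _ (fun i => O i (t a)) (Finset.mem_univ a),
      ht a] at hsum
    have hb : O b (t a) ≤ ∑ i ∈ Finset.univ.erase a, O i (t a) :=
      Finset.single_le_sum (f := fun i => O i (t a)) (fun _ _ => Nat.zero_le _)
        (Finset.mem_erase.mpr ⟨fun h => hne h.symm, Finset.mem_univ b⟩)
    have hOb : O b (t a) = 1 := by rw [hab]; exact ht b
    omega
  -- T i j = 0 before the scheduled step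
  have hT : ∀ i j, j < t i → T i j = 0 := by
    intro i j hj
    rcases hTbin i j with h0 | h1
    · exact h0
    · exfalso
      obtain ⟨j', hj', hO⟩ := hliveprod i j h1
      have : j' = t i := by
        by_contra h
        rw [hzero i j' h] at hO; omega
      omega
  -- edges increase time strictly
  have hstep : ∀ k i, E k i → t k < t i := by
    intro k i hki
    have h1 : (1 : ℕ) ≤ T k (t i) := (ht i) ▸ hprec i (t i) k hki
    have h2 : T k (t i) = 1 := by rcases hTbin k (t i) with h | h <;> omega
    obtain ⟨j', hj', hO⟩ := hliveprod k (t i) h2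
    have hjt : j' = t k := by
      by_contra h
      rw [hzero k j' h] at hO; omega
    have hle : t k ≤ t i := hjt ▸ hj'
    rcases lt_or_eq_of_le hle with h | h
    · exact h
    · exfalso
      have : k = i := hinj h
      exact hacyc i (Relation.TransGen.single (this ▸ hki))
  have htrans : ∀ u i, Relation.TransGen E u i → t u < t i := by
    intro u i h
    induction h with
    | single h => exact hstep _ _ h
    | tail _ h ih => exact ih.trans (hstep _ _ h)
  intro i j
  have h1 : 1 ≤ t i := (Finset.mem_Icc.mp (htmem i)).1
  have h2 : t i ≤ n := (Finset.mem_Icc.mp (htmem i)).2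
  -- ancestor bound
  have hanc : {u : V | Relation.TransGen E u i}.ncard ≤ t i - 1 := by
    have hfin : {u : V | Relation.TransGen E u i}.Finite := Set.toFinite _
    rw [Set.ncard_eq_toFinset_card' ]
    have : ({u : V | Relation.TransGen E u i}.toFinset).card ≤
        (Finset.Icc 1 (t i - 1)).card := by
      apply Finset.card_le_card_of_injOn t
      · intro u hu
        rw [Finset.mem_coe, Set.mem_toFinset] at hu
        have := htrans u i hu
        have := (Finset.mem_Icc.mp (htmem u)).1
        exact Finset.mem_Icc.mpr ⟨by omega, by omega⟩
      · exact fun a _ b _ h => hinj h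
    simpa using this.trans_eq (by rw [Nat.card_Icc]; omega)
  -- descendant bound
  have hdes : {u : V | Relation.TransGen E i u}.ncard ≤ n - t i := by
    rw [Set.ncard_eq_toFinset_card']
    have : ({u : V | Relation.TransGen E i u}.toFinset).card ≤
        (Finset.Icc (t i + 1) n).card := by
      apply Finset.card_le_card_of_injOn t
      · intro u hu
        rw [Finset.mem_coe, Set.mem_toFinset] at hu
        have := htrans i u hu
        have := (Finset.mem_Icc.mp (htmem u)).2
        exact Finset.mem_Icc.mpr ⟨by omega, by omega⟩
      · exact fun a _ b _ h => hinj h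
    simpa using this.trans_eq (by rw [Nat.card_Icc]; omega)
  constructor
  · intro hj
    have hjlt : j < t i := by omega
    exact ⟨hzero i j (by omega), hT i j hjlt⟩
  · intro hj
    have : t i < j := by omega
    exact hzero i j (by omega)
end

section
/- If every intermediate transient footprint of a contiguous block equals at least max(t⁰, tⁿ) (input and output transient footprints), then among all schedules of the whole graph, there exists an optimal (minimum peak memory) schedule in which the block's operators appear contiguously. In particular, restricting the search to schedules where the block is fused does not increase the minimum achievable peak memory. -/
lemma card_filter_eq_range {N : ℕ} (P : Fin N → Prop) [DecidablePred P] (p : ℕ → Prop) [DecidablePred p]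
    (h : ∀ t : Fin N, P t ↔ p t.val) :
    (Finset.univ.filter P).card = ((Finset.range N).filter p).card := by
  rw [Finset.card_filter, Finset.card_filter, ← Fin.sum_univ_eq_sum_range]
  exact Finset.sum_congr rfl fun t _ => by simp [h t]

lemma card_range_filter {N a c : ℕ} (p : ℕ → Prop) [DecidablePred p]
    (h : ∀ x, x < N → (p x ↔ a ≤ x ∧ x < c)) (hc : c ≤ N) :
    ((Finset.range N).filter p).card = c - a := by
  have he : (Finset.range N).filter p = Finset.Ico a c := by
    ext x
    simp only [Finset.mem_filter, Finset.mem_range, Finset.mem_Ico]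
    constructor
    · rintro ⟨hx, hp⟩; exact (h x hx).1 hp
    · intro hx
      have hxN : x < N := lt_of_lt_of_le hx.2 hc
      exact ⟨hxN, (h x hxN).2 hx⟩
  rw [he, Nat.card_Ico]

lemma count_orderIso {N c : ℕ} (b : Fin N → Bool) (v : Bool)
    (h : (Finset.univ.filter (fun t : Fin N => b t = v)).card = c) (i : Fin c) :
    b (((Finset.univ.filter (fun t : Fin N => b t = v)).orderIsoOfFin h i : Fin N)) = v ∧
    (Finset.univ.filter (fun t' : Fin N =>
        t' ≤ ((Finset.univ.filter (fun t : Fin N => b t = v)).orderIsoOfFin h i : Fin N) ∧ b t' = v)).card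
      = i + 1 := by
  classical
  set s := Finset.univ.filter (fun t : Fin N => b t = v) with hs
  set f := s.orderIsoOfFin h with hf
  have hmem : ∀ j : Fin c, b ((f j : Fin N)) = v := fun j => by
    have := (f j).2
    exact (Finset.mem_filter.mp this).2
  refine ⟨hmem i, ?_⟩
  have himg : Finset.univ.filter (fun t' : Fin N => t' ≤ (f i : Fin N) ∧ b t' = v)
      = (Finset.univ.filter (fun j : Fin c => j ≤ i)).image (fun j => ((f j : Fin N))) := by
    ext t'
    simp only [Finset.mem_filter, Finset.mem_univ, true_and, Finset.mem_image]
    constructor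
    · rintro ⟨hle, hb⟩
      have ht' : t' ∈ s := by simp [hs, hb]
      refine ⟨f.symm ⟨t', ht'⟩, ?_, by rw [f.apply_symm_apply]⟩
      have : f (f.symm ⟨t', ht'⟩) ≤ f i := by
        rw [f.apply_symm_apply]
        exact hle
      exact f.le_iff_le.mp this
    · rintro ⟨j, hj, rfl⟩
      exact ⟨by exact_mod_cast f.le_iff_le.mpr hj, hmem j⟩
  rw [himg, Finset.card_image_of_injective _
    (fun a b hab => f.injective (Subtype.ext hab))]
  rw [card_filter_eq_range _ (fun x => x ≤ i.val) (fun j => Fin.le_def)]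
  rw [card_range_filter (a := 0) (c := i.val + 1) _ (fun x _ => by omega) (by omega)]
  omega

lemma card_le_eq_lt_add_one {N : ℕ} (t : Fin N) (q : Fin N → Prop) [DecidablePred q] (hq : q t) :
    (Finset.univ.filter (fun t' => t' ≤ t ∧ q t')).card
      = (Finset.univ.filter (fun t' => t' < t ∧ q t')).card + 1 := by
  have he : Finset.univ.filter (fun t' : Fin N => t' ≤ t ∧ q t')
      = insert t (Finset.univ.filter (fun t' => t' < t ∧ q t')) := by
    ext t'
    simp only [Finset.mem_filter, Finset.mem_univ, true_and, Finset.mem_insert]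
    constructor
    · rintro ⟨hle, hbt⟩
      rcases eq_or_lt_of_le hle with h | h
      · exact Or.inl h
      · exact Or.inr ⟨h, hbt⟩
    · rintro (rfl | ⟨hlt, hbt⟩)
      · exact ⟨le_refl _, hq⟩
      · exact ⟨le_of_lt hlt, hbt⟩
  rw [he, Finset.card_insert_of_notMem (by simp)]

lemma card_mono_le_lt {N : ℕ} {t1 t2 : Fin N} (h : t1 < t2) (q : Fin N → Prop) [DecidablePred q] :
    (Finset.univ.filter (fun t' => t' ≤ t1 ∧ q t')).card
      ≤ (Finset.univ.filter (fun t' => t' < t2 ∧ q t')).card := by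
  apply Finset.card_le_card
  intro t' ht'
  simp only [Finset.mem_filter, Finset.mem_univ, true_and] at ht' ⊢
  obtain ⟨hle, hq⟩ := ht'
  exact ⟨lt_of_le_of_lt hle h, hq⟩

lemma card_mono_lt_lt {N : ℕ} {t1 t2 : Fin N} (h : t1 ≤ t2) (q : Fin N → Prop) [DecidablePred q] :
    (Finset.univ.filter (fun t' => t' < t1 ∧ q t')).card
      ≤ (Finset.univ.filter (fun t' => t' < t2 ∧ q t')).card := by
  apply Finset.card_le_card
  intro t' ht'
  simp only [Finset.mem_filter, Finset.mem_univ, true_and] at ht' ⊢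
  obtain ⟨hlt, hq⟩ := ht'
  exact ⟨lt_of_lt_of_le hlt h, hq⟩

lemma card_lt_le_total {N : ℕ} (t : Fin N) (q : Fin N → Prop) [DecidablePred q] :
    (Finset.univ.filter (fun t' => t' < t ∧ q t')).card ≤ (Finset.univ.filter (fun t' => q t')).card := by
  apply Finset.card_le_card
  intro t' ht'
  simp only [Finset.mem_filter, Finset.mem_univ, true_and] at ht' ⊢
  exact ht'.2

lemma card_false_steps {N n : ℕ} (b : Fin N → Bool)
    (h : (Finset.univ.filter (fun t : Fin N => b t = true)).card = n) :
    (Finset.univ.filter (fun t : Fin N => b t = false)).card = N - n := by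
  have key := Finset.card_filter_add_card_filter_not
    (s := (Finset.univ : Finset (Fin N))) (p := fun t : Fin N => b t = true)
  simp only [Bool.not_eq_true, Finset.card_univ, Fintype.card_fin] at key
  omega

lemma countG_add_countY {N : ℕ} (b : Fin N → Bool) (t : Fin N) :
    countG b t + countY b t = t.val + 1 := by
  classical
  have h1 := Finset.card_filter_add_card_filter_not
    (s := Finset.univ.filter (fun t' : Fin N => t' ≤ t)) (p := fun t' => b t' = true)
  rw [Finset.filter_filter, Finset.filter_filter] at h1
  have hcard : (Finset.univ.filter (fun t' : Fin N => t' ≤ t)).card = t.val + 1 := by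
    rw [card_filter_eq_range _ (fun x => x ≤ t.val) (fun t' => Fin.le_def),
      card_range_filter (a := 0) (c := t.val + 1) _ (fun x _ => by omega) (by omega)]
    omega
  simp only [Bool.not_eq_true] at h1
  rw [hcard] at h1
  exact h1

lemma key_lemma (n m : ℕ) (hn : 0 < n) (sg tg sy ty : ℕ → ℝ)
    (ht : ∀ i, 1 ≤ i → i < n → max (tg 0) (tg n) ≤ tg i)
    (b : Fin (n + m) → Bool)
    (hb : (Finset.univ.filter (fun t : Fin (n + m) => b t = true)).card = n) :
    ∃ k ≤ m, peakMem sg tg sy ty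
        (fun t : Fin (n + m) => decide (k ≤ t.val ∧ t.val < k + n)) ≤ peakMem sg tg sy ty b := by
  classical
  have hN : 0 < n + m := by omega
  haveI : Nonempty (Fin (n + m)) := ⟨⟨0, hN⟩⟩
  have hbdd : BddAbove (Set.range (stableAt sg tg sy ty b)) := (Set.finite_range _).bddAbove
  have hpeak : ∀ t, stableAt sg tg sy ty b t ≤ peakMem sg tg sy ty b := fun t => le_ciSup hbdd t
  have hbf : (Finset.univ.filter (fun t : Fin (n + m) => b t = false)).card = m := by
    have := card_false_steps b hb
    omega
  set gpos : Fin n → Fin (n + m) :=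
    fun i => ((Finset.univ.filter (fun t : Fin (n+m) => b t = true)).orderIsoOfFin hb i : Fin (n+m))
    with hgpos
  set ypos : Fin m → Fin (n + m) :=
    fun j => ((Finset.univ.filter (fun t : Fin (n+m) => b t = false)).orderIsoOfFin hbf j : Fin (n+m))
    with hypos
  have hg : ∀ i : Fin n, b (gpos i) = true ∧ countG b (gpos i) = i + 1 :=
    fun i => count_orderIso b true hb i
  have hy : ∀ j : Fin m, b (ypos j) = false ∧ countY b (ypos j) = j + 1 :=
    fun j => count_orderIso b false hbf j
  obtain ⟨istar, -, hmin⟩ := Finset.exists_min_image Finset.univ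
    (fun i : Fin n => ty (countYBefore b (gpos i))) ⟨⟨0, hn⟩, Finset.mem_univ _⟩
  set p := gpos istar with hp
  set k := countYBefore b p with hkdef
  have hbp : b p = true := (hg istar).1
  have hcGp : countG b p = istar.val + 1 := (hg istar).2
  have hcGBp : countGBefore b p = istar.val := by
    have h2 : countG b p = countGBefore b p + 1 :=
      card_le_eq_lt_add_one p (fun t' => b t' = true) hbp
    omega
  have hk : k ≤ m := by
    rw [hkdef]
    exact le_trans (card_lt_le_total p (fun t' => b t' = false)) hbf.le
  refine ⟨k, hk, ?_⟩
  set b' : Fin (n + m) → Bool := fun t => decide (k ≤ t.val ∧ t.val < k + n) with hb'def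
  have hb'iff : ∀ t : Fin (n+m), b' t = true ↔ (k ≤ t.val ∧ t.val < k + n) := fun t => by
    simp [hb'def]
  have hb'iff2 : ∀ t : Fin (n+m), b' t = false ↔ ¬(k ≤ t.val ∧ t.val < k + n) := fun t => by
    simp [hb'def]
  refine ciSup_le fun t => ?_
  by_cases hA : k ≤ t.val ∧ t.val < k + n
  · -- g-step of the block
    have hbt : b' t = true := (hb'iff t).mpr hA
    have hcG : countG b' t = (t.val - k) + 1 := by
      rw [countG, card_filter_eq_range _ (fun x => x ≤ t.val ∧ (k ≤ x ∧ x < k + n))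
        (fun t' => and_congr Fin.le_def (hb'iff t')),
        card_range_filter (a := k) (c := t.val + 1) _ (fun x _ => by omega) (by omega)]
      omega
    have hcYB : countYBefore b' t = k := by
      rw [countYBefore, card_filter_eq_range _ (fun x => x < t.val ∧ ¬(k ≤ x ∧ x < k + n))
        (fun t' => and_congr Fin.lt_def (hb'iff2 t')),
        card_range_filter (a := 0) (c := k) _ (fun x _ => by omega) (by omega)]
      omega
    rw [stableAt, if_pos hbt, hcG, hcYB]
    set i0 : Fin n := ⟨t.val - k, by omega⟩ with hi0
    refine le_trans ?_ (hpeak (gpos i0))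
    rw [stableAt, if_pos (hg i0).1, (hg i0).2]
    have h2 : ty k ≤ ty (countYBefore b (gpos i0)) := hkdef ▸ hmin i0 (Finset.mem_univ _)
    have h3 : (i0 : ℕ) = t.val - k := rfl
    rw [h3]
    linarith
  · push_neg at hA
    by_cases hB : t.val < k
    · -- Y-step before the block
      have hbt : b' t = false := (hb'iff2 t).mpr (by omega)
      have hcY : countY b' t = t.val + 1 := by
        rw [countY, card_filter_eq_range _ (fun x => x ≤ t.val ∧ ¬(k ≤ x ∧ x < k + n))
          (fun t' => and_congr Fin.le_def (hb'iff2 t')),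
          card_range_filter (a := 0) (c := t.val + 1) _ (fun x _ => by omega) (by omega)]
        omega
      have hcGB : countGBefore b' t = 0 := by
        rw [countGBefore, card_filter_eq_range _ (fun x => x < t.val ∧ (k ≤ x ∧ x < k + n))
          (fun t' => and_congr Fin.lt_def (hb'iff t')),
          card_range_filter (a := 0) (c := 0) _ (fun x _ => by omega) (by omega)]
      rw [stableAt, if_neg (by simp [hbt]), hcY, hcGB]
      set j0 : Fin m := ⟨t.val, by omega⟩ with hj0
      set q := ypos j0 with hq
      have hbq : b q = false := (hy j0).1
      have hcYq : countY b q = t.val + 1 := (hy j0).2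
      have hqp : q < p := by
        by_contra hcon
        push_neg at hcon
        have hne : p ≠ q := fun h => by rw [h, hbq] at hbp; exact Bool.noConfusion hbp
        have hlt : p < q := lt_of_le_of_ne hcon hne
        have h1 : countYBefore b p ≤ countYBefore b q := card_mono_lt_lt (le_of_lt hlt) _
        have h2 : countY b q = countYBefore b q + 1 := card_le_eq_lt_add_one q _ hbq
        omega
      have hcGBq : countGBefore b q ≤ istar.val := by
        have h1 : countGBefore b q ≤ countGBefore b p := card_mono_lt_lt (le_of_lt hqp) _
        omega
      have htg : tg 0 ≤ tg (countGBefore b q) := by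
        rcases Nat.eq_zero_or_pos (countGBefore b q) with h0 | h1
        · rw [h0]
        · exact le_trans (le_max_left _ _) (ht _ h1 (by omega))
      refine le_trans ?_ (hpeak q)
      rw [stableAt, if_neg (by simp [hbq]), hcYq]
      linarith
    · -- Y-step after the block
      have hC : k + n ≤ t.val := by omega
      have hbt : b' t = false := (hb'iff2 t).mpr (by omega)
      have hcG : countG b' t = n := by
        rw [countG, card_filter_eq_range _ (fun x => x ≤ t.val ∧ (k ≤ x ∧ x < k + n))
          (fun t' => and_congr Fin.le_def (hb'iff t')),
          card_range_filter (a := k) (c := k + n) _ (fun x _ => by omega) (by omega)]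
        omega
      have hcY : countY b' t = t.val + 1 - n := by
        have := countG_add_countY b' t
        omega
      have hcGB : countGBefore b' t = n := by
        rw [countGBefore, card_filter_eq_range _ (fun x => x < t.val ∧ (k ≤ x ∧ x < k + n))
          (fun t' => and_congr Fin.lt_def (hb'iff t')),
          card_range_filter (a := k) (c := k + n) _ (fun x _ => by omega) (by omega)]
        omega
      rw [stableAt, if_neg (by simp [hbt]), hcY, hcGB]
      set j0 : Fin m := ⟨t.val - n, by omega⟩ with hj0
      set q := ypos j0 with hq
      have hbq : b q = false := (hy j0).1
      have hcYq : countY b q = (t.val - n) + 1 := (hy j0).2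
      have hpq : p < q := by
        by_contra hcon
        push_neg at hcon
        have hne : q ≠ p := fun h => by rw [h, hbp] at hbq; exact Bool.noConfusion hbq
        have hlt : q < p := lt_of_le_of_ne hcon hne
        have h1 : countY b q ≤ countYBefore b p := card_mono_le_lt hlt _
        omega
      have hlow : 1 ≤ countGBefore b q := by
        have h1 : countG b p ≤ countGBefore b q := card_mono_le_lt hpq _
        omega
      have hhigh : countGBefore b q ≤ n := by
        exact le_trans (card_lt_le_total q (fun t' => b t' = true)) hb.le
      have htg : tg n ≤ tg (countGBefore b q) := by
        rcases eq_or_lt_of_le hhigh with h0 | h1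
        · rw [h0]
        · exact le_trans (le_max_right _ _) (ht _ hlow h1)
      refine le_trans ?_ (hpeak q)
      rw [stableAt, if_neg (by simp [hbq]), hcYq]
      have heq : t.val + 1 - n = (t.val - n) + 1 := by omega
      rw [heq]
      linarith

/-- if every intermediate transient footprint of the block `g` is
at least `max (tg 0) (tg n)`, then among all interleavings of `g` with the
parallel operators there is one of minimum peak memory in which the block's
operators appear contiguously; restricting the search to fused schedules does
not increase the minimum achievable peak memory. -/
theorem stmt_13 (n m : ℕ) (hn : 0 < n) (sg tg sy ty : ℕ → ℝ)
    (ht : ∀ i, 1 ≤ i → i < n → max (tg 0) (tg n) ≤ tg i) :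
    ∃ b' : Fin (n + m) → Bool,
      (Finset.univ.filter (fun t : Fin (n + m) => b' t = true)).card = n ∧
      contiguous b' ∧
      ∀ b : Fin (n + m) → Bool,
        (Finset.univ.filter (fun t : Fin (n + m) => b t = true)).card = n →
        peakMem sg tg sy ty b' ≤ peakMem sg tg sy ty b := by
  classical
  obtain ⟨k₀, hk₀mem, hminK⟩ := Finset.exists_min_image (Finset.range (m + 1))
    (fun k => peakMem sg tg sy ty (fun t : Fin (n + m) => decide (k ≤ t.val ∧ t.val < k + n)))
    ⟨0, by simp⟩
  have hk₀ : k₀ ≤ m := by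
    have := Finset.mem_range.mp hk₀mem
    omega
  refine ⟨fun t => decide (k₀ ≤ t.val ∧ t.val < k₀ + n), ?_, ?_, ?_⟩
  · rw [card_filter_eq_range _ (fun x => k₀ ≤ x ∧ x < k₀ + n) (fun t => by simp),
      card_range_filter (a := k₀) (c := k₀ + n) _ (fun x _ => Iff.rfl) (by omega)]
    omega
  · intro t1 t2 t3 h12 h23 h1 h3
    simp only [decide_eq_true_eq] at h1 h3 ⊢
    rw [Fin.le_def] at h12 h23
    omega
  · intro b hbcard
    obtain ⟨k, hk, hle⟩ := key_lemma n m hn sg tg sy ty ht b hbcard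
    exact le_trans (hminK k (Finset.mem_range.mpr (by omega))) hle
end

section
/- Schedule lifting after fusion: let G be a DAG and U ⊆ V a convex set contracted to hypernode v_g yielding DAG G_f. Given any topological schedule σ_f of G_f and any topological schedule σ_U of the induced subgraph G_U, the schedule of G obtained by replacing v_g in σ_f by the sequence σ_U is a topological schedule of G. -/
/-- Edge relation of the graph obtained from `E` by contracting the vertex set
`U` to a single hypernode (represented by `none`); vertices outside `U` are
represented by `some`; self-loops at the hypernode are discarded. -/
def contractRel {V : Type*} [DecidableEq V] (E : V → V → Prop) (U : Finset V) :
    Option {v : V // v ∉ U} → Option {v : V // v ∉ U} → Prop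
  | some a, some b => E a.1 b.1
  | some a, none => ∃ u ∈ U, E a.1 u
  | none, some b => ∃ u ∈ U, E u b.1
  | none, none => False

/-- schedule lifting after fusion. Given a convex set `U`
contracted to the hypernode, any topological schedule `σf` of the contracted
graph and any topological schedule `σU` of the induced subgraph `G_U` combine
(by replacing the hypernode with the sequence `σU`, i.e. ordering `V`
lexicographically by the contracted position and then the inner position) into
a topological schedule of `G`. -/
theorem stmt_15 {V : Type*} [Fintype V] [DecidableEq V] (E : V → V → Prop)
    (hacyc : ∀ v : V, ¬ Relation.TransGen E v v) (U : Finset V)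
    (hconv : ∀ x : V, x ∉ U →
      ¬ ((∃ u ∈ U, Relation.TransGen E u x) ∧ (∃ w ∈ U, Relation.TransGen E x w)))
    (σf : Option {v : V // v ∉ U} ≃ Fin (Fintype.card (Option {v : V // v ∉ U})))
    (hσf : ∀ a b : Option {v : V // v ∉ U}, contractRel E U a b → (σf a : ℕ) < (σf b : ℕ))
    (σU : {v : V // v ∈ U} ≃ Fin (Fintype.card {v : V // v ∈ U}))
    (hσU : ∀ a b : {v : V // v ∈ U}, E a.1 b.1 → (σU a : ℕ) < (σU b : ℕ)) :
    let ρ : V → ℕ × ℕ := fun v =>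
      if h : v ∈ U then ((σf none : ℕ), (σU ⟨v, h⟩ : ℕ))
      else ((σf (some ⟨v, h⟩) : ℕ), 0)
    ∃ σ : V ≃ Fin (Fintype.card V),
      (∀ u v : V, E u v → (σ u : ℕ) < (σ v : ℕ)) ∧
      ∀ a b : V, (σ a : ℕ) < (σ b : ℕ) ↔
        ((ρ a).1 < (ρ b).1 ∨ ((ρ a).1 = (ρ b).1 ∧ (ρ a).2 < (ρ b).2)) := by
  intro ρ
  -- key: ρ is injective (viewing ℕ × ℕ lexicographically)
  have hinj : Function.Injective (fun v => toLex (ρ v) : V → ℕ ×ₗ ℕ) := by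
    intro a b hab
    have hab' : ρ a = ρ b := congrArg ofLex hab
    have h1 : (ρ a).1 = (ρ b).1 := congrArg Prod.fst hab'
    have h2 : (ρ a).2 = (ρ b).2 := congrArg Prod.snd hab'
    by_cases ha : a ∈ U <;> by_cases hb : b ∈ U
    · simp only [ρ, dif_pos ha, dif_pos hb] at h2
      have : σU ⟨a, ha⟩ = σU ⟨b, hb⟩ := Fin.ext h2
      simpa using congrArg Subtype.val (σU.injective this)
    · simp only [ρ, dif_pos ha, dif_neg hb] at h1
      exact absurd (σf.injective (Fin.ext h1)) (by simp)
    · simp only [ρ, dif_neg ha, dif_pos hb] at h1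
      exact absurd (σf.injective (Fin.ext h1)) (by simp)
    · simp only [ρ, dif_neg ha, dif_neg hb] at h1
      have : σf (some ⟨a, ha⟩) = σf (some ⟨b, hb⟩) := Fin.ext h1
      simpa using congrArg Subtype.val (Option.some_injective _ (σf.injective this))
  -- lex order on ρ respects E
  have hE : ∀ u v : V, E u v → ((ρ u).1 < (ρ v).1 ∨ ((ρ u).1 = (ρ v).1 ∧ (ρ u).2 < (ρ v).2)) := by
    intro u v huv
    by_cases hu : u ∈ U <;> by_cases hv : v ∈ U
    · exact Or.inr ⟨by simp [ρ, hu, hv],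
        by simpa [ρ, hu, hv] using hσU ⟨u, hu⟩ ⟨v, hv⟩ huv⟩
    · exact Or.inl (by simpa [ρ, hu, hv] using hσf none (some ⟨v, hv⟩) ⟨u, hu, huv⟩)
    · exact Or.inl (by simpa [ρ, hu, hv] using hσf (some ⟨u, hu⟩) none ⟨v, hv, huv⟩)
    · exact Or.inl (by simpa [ρ, hu, hv] using hσf (some ⟨u, hu⟩) (some ⟨v, hv⟩) huv)
  letI : LinearOrder V := LinearOrder.lift' (fun v => toLex (ρ v) : V → ℕ ×ₗ ℕ) hinj
  have hlt : ∀ a b : V, a < b ↔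
      ((ρ a).1 < (ρ b).1 ∨ ((ρ a).1 = (ρ b).1 ∧ (ρ a).2 < (ρ b).2)) := by
    intro a b
    show toLex (ρ a) < toLex (ρ b) ↔ _
    exact Prod.Lex.lt_iff
  let e : V ≃o Fin (Fintype.card V) := (monoEquivOfFin V rfl).symm
  refine ⟨e.toEquiv, ?_, ?_⟩
  · intro u v huv
    have : u < v := (hlt u v).mpr (hE u v huv)
    exact e.strictMono this
  · intro a b
    rw [show ((e.toEquiv a : ℕ) < (e.toEquiv b : ℕ)) ↔ e a < e b from Iff.rfl.trans Fin.lt_iff_val_lt_val.symm,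
      e.lt_iff_lt]
    exact hlt a b
end
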